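/- Let g : ℝ^{d1} × ℝ^{d2} → ℝ be such that for every x ∈ ℝ^{d1} the function y ↦ g(x, y) is differentiable and μ_g-strongly convex (with μ_g > 0) and attains its minimum at a point y*(x) ∈ ℝ^{d2} (unique by strong convexity), and suppose the partial-gradient map (x, y) ↦ ∇_y g(x, y) is ℓ_{g,1}-Lipschitz on ℝ^{d1} × ℝ^{d2}. Then for all x, x' ∈ ℝ^{d1} one has ‖y*(x) − y*(x')‖ ≤ (ℓ_{g,1}/μ_g)·‖x − x'‖; that is, the inner-minimizer map x ↦ y*(x) is Lipschitz with constant equal to the condition number κ_g := ℓ_{g,1}/μ_g. -/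

import Mathlib

open Finset

open Set Filter Topology in
lemma convex_first_order {F : Type*} [NormedAddCommGroup F] [NormedSpace ℝ F]
    (h : F → ℝ) (hc : ConvexOn ℝ Set.univ h) {y : F} (hd : DifferentiableAt ℝ h y) (z : F) :
    h y + fderiv ℝ h y (z - y) ≤ h z := by
  set L := fderiv ℝ h y with hL
  set φ : ℝ → ℝ := fun t => h (y + t • (z - y)) with hφdef
  have hφ : HasDerivAt φ (L (z - y)) 0 := by
    have h1 : HasDerivAt (fun t : ℝ => y + t • (z - y)) (z - y) 0 := by
      simpa using ((hasDerivAt_id (0 : ℝ)).smul_const (z - y)).const_add y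
    have h2 : HasFDerivAt h L (y + (0 : ℝ) • (z - y)) := by
      simpa using hd.hasFDerivAt
    exact h2.comp_hasDerivAt 0 h1
  rw [hasDerivAt_iff_tendsto_slope] at hφ
  have htends : Tendsto (slope φ 0) (𝓝[>] (0 : ℝ)) (𝓝 (L (z - y))) :=
    hφ.mono_left (nhdsWithin_mono _ fun t ht => ne_of_gt ht)
  have hkey : L (z - y) ≤ h z - h y := by
    refine le_of_tendsto htends ?_
    filter_upwards [Ioc_mem_nhdsGT_of_mem (Set.left_mem_Ico.mpr zero_lt_one)] with t ht
    have ht0 : 0 < t := ht.1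
    have hconv := hc.2 (Set.mem_univ y) (Set.mem_univ z)
      (by linarith [ht.2] : (0:ℝ) ≤ 1 - t) (le_of_lt ht0) (by ring)
    have heq : y + t • (z - y) = (1 - t) • y + t • z := by
      module
    have : φ t ≤ (1 - t) * h y + t * h z := by
      rw [hφdef]; simp only []; rw [heq]; simpa using hconv
    have hslope : slope φ 0 t = (φ t - φ 0) / t := by
      simp [slope_def_field]
    rw [hslope]
    have hφ0 : φ 0 = h y := by simp [hφdef]
    rw [div_le_iff₀ ht0, hφ0]
    nlinarith
  linarith


/-- Lipschitz continuity of the inner-minimizer map: if `g(x, ·)` is `μg`-strongly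
convex with minimizer `ystar x` and `(x, y) ↦ ∇_y g(x, y)` is `ℓg1`-Lipschitz for the
Euclidean norm on the product, then `x ↦ ystar x` is `ℓg1/μg`-Lipschitz. -/
theorem inner_minimizer_lipschitz
    (d1 d2 : ℕ)
    (g : EuclideanSpace ℝ (Fin d1) → EuclideanSpace ℝ (Fin d2) → ℝ)
    (μg ℓg1 : ℝ) (hμg : 0 < μg)
    (hdiff : ∀ x, Differentiable ℝ (g x))
    (hsc : ∀ x, ConvexOn ℝ Set.univ (fun y => g x y - μg / 2 * ‖y‖ ^ 2))
    (ystar : EuclideanSpace ℝ (Fin d1) → EuclideanSpace ℝ (Fin d2))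
    (hmin : ∀ x y, g x (ystar x) ≤ g x y)
    (hlip : ∀ x x' y y', ‖gradient (g x) y - gradient (g x') y'‖
      ≤ ℓg1 * Real.sqrt (‖x - x'‖ ^ 2 + ‖y - y'‖ ^ 2)) :
    ∀ x x', ‖ystar x - ystar x'‖ ≤ (ℓg1 / μg) * ‖x - x'‖ := by
  have hf0 : ∀ x, fderiv ℝ (g x) (ystar x) = 0 := by
    intro x
    have hloc : IsLocalMin (g x) (ystar x) := Filter.Eventually.of_forall (hmin x)
    exact hloc.fderiv_eq_zero
  have hg0 : ∀ x, gradient (g x) (ystar x) = 0 := by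
    intro x
    simp [gradient, hf0 x]
  intro x x'
  rcases eq_or_ne x x' with rfl | hne
  · simp
  · have hxpos : 0 < ‖x - x'‖ := by
      rwa [norm_sub_pos_iff]
    have hl0 : 0 ≤ ℓg1 := by
      have h1 := hlip x x' (ystar x) (ystar x)
      simp only [sub_self, norm_zero] at h1
      rw [zero_pow (by norm_num), add_zero, Real.sqrt_sq (norm_nonneg _)] at h1
      nlinarith [norm_nonneg (gradient (g x) (ystar x) - gradient (g x') (ystar x))]
    set a := ystar x with ha
    set b := ystar x' with hb
    set h : EuclideanSpace ℝ (Fin d2) → ℝ := fun y => g x y - μg / 2 * ‖y‖ ^ 2 with hdef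
    have hdh : ∀ y : EuclideanSpace ℝ (Fin d2), HasFDerivAt h
        (fderiv ℝ (g x) y - (μg / 2) • (2 • (innerSL ℝ y).comp
          (ContinuousLinearMap.id ℝ (EuclideanSpace ℝ (Fin d2))))) y := by
      intro y
      exact ((hdiff x y).hasFDerivAt).sub (((hasFDerivAt_id y).norm_sq).const_mul (μg / 2))
    have hfd : ∀ y v : EuclideanSpace ℝ (Fin d2),
        fderiv ℝ h y v = fderiv ℝ (g x) y v - μg * inner ℝ y v := by
      intro y v
      rw [(hdh y).fderiv]
      simp [real_inner_comm]
      ring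
    have H1 := convex_first_order h (hsc x) (hdh a).differentiableAt b
    have H2 := convex_first_order h (hsc x) (hdh b).differentiableAt a
    rw [hfd] at H1 H2
    have hfa : fderiv ℝ (g x) a (b - a) = 0 := by rw [ha, hf0 x]; simp
    have einner : (inner ℝ a (b - a) : ℝ) + inner ℝ b (a - b) = -‖a - b‖ ^ 2 := by
      have h1 : (inner ℝ (a - b) (a - b) : ℝ) = ‖a - b‖ ^ 2 := real_inner_self_eq_norm_sq _
      simp only [inner_sub_left, inner_sub_right] at h1 ⊢
      linarith [real_inner_comm a b]
    have key : μg * ‖a - b‖ ^ 2 ≤ fderiv ℝ (g x) b (b - a) := by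
      have hDb : fderiv ℝ (g x) b (a - b) = -fderiv ℝ (g x) b (b - a) := by
        rw [show a - b = -(b - a) by abel, map_neg]
      rw [hfa] at H1
      rw [hDb] at H2
      nlinarith [H1, H2, einner]
    have hDb2 : fderiv ℝ (g x) b (b - a) = inner ℝ (gradient (g x) b - gradient (g x') b) (b - a) := by
      rw [hg0 x', sub_zero]
      exact (InnerProductSpace.toDual_symm_apply).symm
    have hcs : (inner ℝ (gradient (g x) b - gradient (g x') b) (b - a) : ℝ)
        ≤ ‖gradient (g x) b - gradient (g x') b‖ * ‖b - a‖ := real_inner_le_norm _ _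
    have hlipb := hlip x x' b b
    simp only [sub_self, norm_zero] at hlipb
    rw [zero_pow (by norm_num), add_zero, Real.sqrt_sq (norm_nonneg _)] at hlipb
    have hba : ‖b - a‖ = ‖a - b‖ := norm_sub_rev _ _
    have final : μg * ‖a - b‖ ^ 2 ≤ ℓg1 * ‖x - x'‖ * ‖a - b‖ := by
      calc μg * ‖a - b‖ ^ 2 ≤ fderiv ℝ (g x) b (b - a) := key
        _ ≤ ‖gradient (g x) b - gradient (g x') b‖ * ‖b - a‖ := by rw [hDb2]; exact hcs
        _ ≤ ℓg1 * ‖x - x'‖ * ‖a - b‖ := by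
            rw [hba] at *
            exact mul_le_mul_of_nonneg_right hlipb (norm_nonneg _)
    rcases eq_or_lt_of_le (norm_nonneg (a - b)) with h0 | h0
    · rw [← h0]
      positivity
    · rw [div_mul_eq_mul_div, le_div_iff₀ hμg]
      nlinarith [final, h0]
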